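/- Let H be a Raikov complete subgroup of a Hausdorff topological group G such that the coset space G/H is compact Hausdorff. Then H is a key subgroup of G. -/

import Mathlib

open Topology Filter

/-- Subspace topology induced on a subgroup `H` by a topology `t` on `G`. -/
def subTop {G : Type*} [Group G] (t : TopologicalSpace G) (H : Subgroup G) :
    TopologicalSpace H :=
  t.induced ((↑) : H → G)

/-- Quotient topology on the coset space `G ⧸ H` induced by a topology `t` on `G`. -/
def quotTop {G : Type*} [Group G] (t : TopologicalSpace G) (H : Subgroup G) :
    TopologicalSpace (G ⧸ H) :=
  t.coinduced (QuotientGroup.mk : G → G ⧸ H)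

/-- `H` is a key subgroup of `(G, γ)`: every coarser Hausdorff group topology `γ₁`
(`γ ≤ γ₁` in Mathlib's order means `γ₁` is coarser than `γ`) inducing the original
subspace topology on `H` coincides with `γ`. -/
def IsKey {G : Type*} [Group G] (γ : TopologicalSpace G) (H : Subgroup G) : Prop :=
  ∀ γ₁ : TopologicalSpace G, γ ≤ γ₁ → @IsTopologicalGroup G γ₁ _ → @T2Space G γ₁ →
    subTop γ₁ H = subTop γ H → γ₁ = γ

/-- `H` is a co-key subgroup of `(G, γ)`: every coarser Hausdorff group topology `γ₁`
inducing the original quotient topology on `G ⧸ H` coincides with `γ`. -/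
def IsCoKey {G : Type*} [Group G] (γ : TopologicalSpace G) (H : Subgroup G) : Prop :=
  ∀ γ₁ : TopologicalSpace G, γ ≤ γ₁ → @IsTopologicalGroup G γ₁ _ → @T2Space G γ₁ →
    quotTop γ₁ H = quotTop γ H → γ₁ = γ

/-- `H` is relatively minimal in `(G, γ)`: every coarser Hausdorff group topology on `G`
induces the original subspace topology on `H`. -/
def IsRelMin {G : Type*} [Group G] (γ : TopologicalSpace G) (H : Subgroup G) : Prop :=
  ∀ γ₁ : TopologicalSpace G, γ ≤ γ₁ → @IsTopologicalGroup G γ₁ _ → @T2Space G γ₁ →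
    subTop γ₁ H = subTop γ H

/-- `H` is co-minimal in `(G, γ)`: every coarser Hausdorff group topology on `G`
induces the original quotient topology on the coset space `G ⧸ H`. -/
def IsCoMin {G : Type*} [Group G] (γ : TopologicalSpace G) (H : Subgroup G) : Prop :=
  ∀ γ₁ : TopologicalSpace G, γ ≤ γ₁ → @IsTopologicalGroup G γ₁ _ → @T2Space G γ₁ →
    quotTop γ₁ H = quotTop γ H

/-- `(X, γ)` is a minimal topological group: no strictly coarser Hausdorff group topology. -/
def IsMinimalGroup {X : Type*} [Group X] (γ : TopologicalSpace X) : Prop :=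
  ∀ γ₁ : TopologicalSpace X, γ ≤ γ₁ → @IsTopologicalGroup X γ₁ _ → @T2Space X γ₁ → γ₁ = γ

/-- The two-sided (Raikov) uniformity filter of a group topology. -/
def twoSidedUniformity {X : Type*} [Group X] (t : TopologicalSpace X) : Filter (X × X) :=
  Filter.comap (fun p : X × X => p.2 / p.1) (@nhds X t 1) ⊓
    Filter.comap (fun p : X × X => p.1⁻¹ * p.2) (@nhds X t 1)

/-- Raikov completeness: every Cauchy filter with respect to the two-sided uniformity
converges. -/
def RaikovComplete {X : Type*} [Group X] (t : TopologicalSpace X) : Prop :=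
  ∀ f : Filter X, f.NeBot → f ×ˢ f ≤ twoSidedUniformity t → ∃ x, f ≤ @nhds X t x

lemma aux_closed {G : Type*} [Group G] [τ : TopologicalSpace G] [IsTopologicalGroup G]
    [T2Space G] (H : Subgroup G) (hR : RaikovComplete (subTop τ H)) :
    IsClosed (H : Set G) := by
  have hsub : subTop τ H = (inferInstance : TopologicalSpace H) := rfl
  rw [hsub] at hR
  rw [← closure_subset_iff_isClosed]
  intro x hx
  set f : Filter H := comap ((↑) : H → G) (𝓝 x) with hf
  have hne : f.NeBot := by
    rw [comap_neBot_iff]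
    intro t ht
    rcases mem_closure_iff_nhds.1 hx t ht with ⟨y, hyt, hyH⟩
    exact ⟨⟨y, hyH⟩, hyt⟩
  have hcauchy : f ×ˢ f ≤ twoSidedUniformity (inferInstance : TopologicalSpace H) := by
    have hprod : f ×ˢ f = comap (fun p : H × H => ((p.1 : G), (p.2 : G))) (𝓝 x ×ˢ 𝓝 x) := by
      rw [hf, prod_comap_comap_eq]
    apply le_inf
    · have h1 : 𝓝 x ×ˢ 𝓝 x ≤ comap (fun p : G × G => p.2 / p.1) (𝓝 (1 : G)) := by
        have : Filter.Tendsto (fun p : G × G => p.2 / p.1) (𝓝 x ×ˢ 𝓝 x) (𝓝 (x / x)) := by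
          rw [← nhds_prod_eq]
          exact ((continuous_snd.div' continuous_fst).continuousAt (x := (x, x)))
        rw [div_self'] at this
        exact this.le_comap
      calc f ×ˢ f = comap (fun p : H × H => ((p.1 : G), (p.2 : G))) (𝓝 x ×ˢ 𝓝 x) := hprod
        _ ≤ comap (fun p : H × H => ((p.1 : G), (p.2 : G)))
            (comap (fun p : G × G => p.2 / p.1) (𝓝 (1 : G))) := comap_mono h1
        _ = comap (fun p : H × H => ((p.2 : G) / (p.1 : G))) (𝓝 (1 : G)) := by
            rw [comap_comap]; rfl
        _ = comap (fun p : H × H => p.2 / p.1) (𝓝 (1 : H)) := by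
            rw [nhds_induced, comap_comap]; rfl
    · have h1 : 𝓝 x ×ˢ 𝓝 x ≤ comap (fun p : G × G => p.1⁻¹ * p.2) (𝓝 (1 : G)) := by
        have : Filter.Tendsto (fun p : G × G => p.1⁻¹ * p.2) (𝓝 x ×ˢ 𝓝 x) (𝓝 (x⁻¹ * x)) := by
          rw [← nhds_prod_eq]
          exact (((continuous_fst.inv).mul continuous_snd).continuousAt (x := (x, x)))
        rw [inv_mul_cancel] at this
        exact this.le_comap
      calc f ×ˢ f = comap (fun p : H × H => ((p.1 : G), (p.2 : G))) (𝓝 x ×ˢ 𝓝 x) := hprod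
        _ ≤ comap (fun p : H × H => ((p.1 : G), (p.2 : G)))
            (comap (fun p : G × G => p.1⁻¹ * p.2) (𝓝 (1 : G))) := comap_mono h1
        _ = comap (fun p : H × H => (p.1 : G)⁻¹ * (p.2 : G)) (𝓝 (1 : G)) := by
            rw [comap_comap]; rfl
        _ = comap (fun p : H × H => p.1⁻¹ * p.2) (𝓝 (1 : H)) := by
            rw [nhds_induced, comap_comap]; rfl
  rcases hR f hne hcauchy with ⟨h, hfh⟩
  have h1 : map ((↑) : H → G) f ≤ 𝓝 (h : G) :=
    (map_mono hfh).trans (continuous_subtype_val.continuousAt (x := h))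
  have h2 : map ((↑) : H → G) f ≤ 𝓝 x := map_comap_le
  haveI : (map ((↑) : H → G) f).NeBot := map_neBot
  have : x = (h : G) := tendsto_nhds_unique h2 h1
  rw [this]; exact h.2

lemma aux_quot_t2 {G : Type*} [Group G] [TopologicalSpace G] [IsTopologicalGroup G]
    (H : Subgroup G) (hc : IsClosed (H : Set G)) : T2Space (G ⧸ H) := by
  constructor
  intro a b hab
  obtain ⟨x, rfl⟩ := QuotientGroup.mk_surjective a
  obtain ⟨y, rfl⟩ := QuotientGroup.mk_surjective b
  have hxy : (x, y) ∈ ((fun p : G × G => p.1⁻¹ * p.2) ⁻¹' (H : Set G))ᶜ := by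
    intro hmem
    exact hab (QuotientGroup.eq.2 hmem)
  have hopen : IsOpen ((fun p : G × G => p.1⁻¹ * p.2) ⁻¹' (H : Set G))ᶜ :=
    (hc.preimage (continuous_fst.inv.mul continuous_snd)).isOpen_compl
  rcases isOpen_prod_iff.1 hopen x y hxy with ⟨U, V, hU, hV, hxU, hyV, hUV⟩
  refine ⟨QuotientGroup.mk '' U, QuotientGroup.mk '' V,
    QuotientGroup.isOpenMap_coe U hU, QuotientGroup.isOpenMap_coe V hV,
    ⟨x, hxU, rfl⟩, ⟨y, hyV, rfl⟩, ?_⟩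
  rw [Set.disjoint_left]
  rintro c ⟨u, hu, rfl⟩ ⟨v, hv, huv⟩
  have : u⁻¹ * v ∈ H := QuotientGroup.eq.1 huv.symm
  exact hUV (Set.mk_mem_prod hu hv) this

lemma merson {G : Type*} [Group G] (t' : TopologicalSpace G)
    (ht' : @IsTopologicalGroup G t' _)
    [τ : TopologicalSpace G] [IsTopologicalGroup G] (hle : τ ≤ t')
    (H : Subgroup G)
    (hsub : subTop t' H = subTop τ H)
    (hquot : quotTop t' H = quotTop τ H) : t' = τ := by
  refine IsTopologicalGroup.ext ht' inferInstance ?_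
  refine le_antisymm ?_ (nhds_mono hle)
  intro U hU
  -- split U in τ
  obtain ⟨V, hV, hVU⟩ :=
    @exists_nhds_one_split G τ _ _ U hU
  -- subgroup condition gives W'
  have hpre : ((↑) : H → G) ⁻¹' V ∈ @nhds H (subTop τ H) 1 := by
    rw [subTop, nhds_induced ((↑) : H → G) (1 : H), OneMemClass.coe_one]
    exact preimage_mem_comap hV
  rw [← hsub] at hpre
  have hpre' : ((↑) : H → G) ⁻¹' V ∈ Filter.comap ((↑) : H → G) (@nhds G t' 1) := by
    rw [subTop] at hpre
    rwa [@nhds_induced G H t' ((↑) : H → G) (1 : H), OneMemClass.coe_one] at hpre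
  obtain ⟨W', hW', hW'sub⟩ := Filter.mem_comap.1 hpre'
  -- symmetric split of W' in t'
  obtain ⟨W₀, hW₀, hW₀split⟩ :=
    @exists_nhds_one_split G t' _ ht'.toContinuousMul W' hW'
  have hinv : {g : G | g⁻¹ ∈ W₀} ∈ @nhds G t' 1 := by
    have h := @Continuous.tendsto G G t' t' _
      (@continuous_inv G t' _ ht'.toContinuousInv) (1 : G)
    rw [inv_one] at h
    exact h hW₀
  set W : Set G := W₀ ∩ {g | g⁻¹ ∈ W₀} with hWdef
  have hW : W ∈ @nhds G t' 1 := Filter.inter_mem hW₀ hinv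
  have hWprop : ∀ a ∈ W, ∀ b ∈ W, a⁻¹ * b ∈ W' := fun a ha b hb =>
    hW₀split a⁻¹ ha.2 b hb.1
  -- interior in τ
  have hVW : V ∩ W ∈ 𝓝 (1 : G) := Filter.inter_mem hV (nhds_mono hle hW)
  set S : Set G := interior (V ∩ W) with hSdef
  have h1S : (1 : G) ∈ S := mem_interior_iff_mem_nhds.2 hVW
  -- the saturation of S
  have hSH : (QuotientGroup.mk : G → G ⧸ H) ⁻¹' (QuotientGroup.mk '' S) =
      ⋃ h : H, (fun g => g * (h : G)) '' S := by
    ext x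
    simp only [Set.mem_preimage, Set.mem_image, Set.mem_iUnion]
    constructor
    · rintro ⟨s, hs, hsx⟩
      have hmem : s⁻¹ * x ∈ H := QuotientGroup.eq.1 hsx
      exact ⟨⟨s⁻¹ * x, hmem⟩, s, hs, by group⟩
    · rintro ⟨h, s, hs, rfl⟩
      exact ⟨s, hs, (QuotientGroup.eq.2 (by simpa using h.2)).symm⟩
  have hopenτ : IsOpen ((QuotientGroup.mk : G → G ⧸ H) ⁻¹' (QuotientGroup.mk '' S)) := by
    rw [hSH]
    exact isOpen_iUnion fun h =>
      (Homeomorph.mulRight (h : G)).isOpenMap _ isOpen_interior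
  have hqopen : IsOpen[quotTop τ H] (QuotientGroup.mk '' S : Set (G ⧸ H)) := by
    rw [quotTop, isOpen_coinduced]
    exact hopenτ
  rw [← hquot] at hqopen
  have hopent' : IsOpen[t'] ((QuotientGroup.mk : G → G ⧸ H) ⁻¹' (QuotientGroup.mk '' S)) := by
    rw [quotTop] at hqopen
    exact (@isOpen_coinduced G (G ⧸ H) t' _ _).1 hqopen
  have hSHnhds : (QuotientGroup.mk : G → G ⧸ H) ⁻¹' (QuotientGroup.mk '' S) ∈
      @nhds G t' 1 := by
    refine @IsOpen.mem_nhds G t' 1 _ hopent' ?_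
    exact ⟨1, h1S, rfl⟩
  refine Filter.mem_of_superset (Filter.inter_mem hW hSHnhds) ?_
  rintro x ⟨hxW, hxSH⟩
  rw [hSH] at hxSH
  simp only [Set.mem_iUnion, Set.mem_image] at hxSH
  obtain ⟨h, s, hs, rfl⟩ := hxSH
  have hsVW : s ∈ V ∩ W := interior_subset hs
  have hh : (h : G) ∈ W' := by
    have := hWprop s hsVW.2 (s * h) hxW
    simpa using this
  have hhV : (h : G) ∈ V := hW'sub hh
  exact hVU s hsVW.1 (h : G) hhV



lemma eq_of_compact_t2 {X : Type*} {t t' : TopologicalSpace X} (h : t ≤ t')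
    (hc : @CompactSpace X t) (h2 : @T2Space X t') : t' = t := by
  refine le_antisymm ?_ h
  intro U hU
  have hU' : @IsClosed X t Uᶜ := (@isClosed_compl_iff X t U).2 hU
  have hcpt : @IsCompact X t Uᶜ := @IsClosed.isCompact X t Uᶜ hc hU'
  have himg : @IsCompact X t' (id '' Uᶜ) :=
    @IsCompact.image X X t t' Uᶜ id hcpt (continuous_id_of_le h)
  rw [Set.image_id] at himg
  have hcl : @IsClosed X t' Uᶜ := @IsCompact.isClosed X t' h2 Uᶜ himg
  exact (@isClosed_compl_iff X t' U).1 hcl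

/-- A Raikov complete co-compact subgroup is a key subgroup. -/
theorem isKey_of_raikovComplete_cocompact {G : Type*} [Group G] (γ : TopologicalSpace G)
    (hγ : @IsTopologicalGroup G γ _) (hT2 : @T2Space G γ)
    (H : Subgroup G) (hR : RaikovComplete (subTop γ H))
    (hcomp : @CompactSpace (G ⧸ H) (quotTop γ H))
    (hq2 : @T2Space (G ⧸ H) (quotTop γ H)) :
    IsKey γ H := by
  intro γ₁ hle hTG1 hT21 hsub
  have hR1 : RaikovComplete (subTop γ₁ H) := by rw [hsub]; exact hR
  have hclosed : @IsClosed G γ₁ (H : Set G) :=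
    @aux_closed G _ γ₁ hTG1 hT21 H hR1
  have hq2' : @T2Space (G ⧸ H) (quotTop γ₁ H) :=
    @aux_quot_t2 G _ γ₁ hTG1 H hclosed
  have hcq : quotTop γ H ≤ quotTop γ₁ H := by
    rw [quotTop, quotTop]
    exact coinduced_mono hle
  have hquoteq : quotTop γ₁ H = quotTop γ H := eq_of_compact_t2 hcq hcomp hq2'
  exact @merson G _ γ₁ hTG1 γ hγ hle H hsub hquoteq
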